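/- arXiv:2206.02944 — 2 statements merged into one kernel-verified Lean document; each statement's English description precedes it below -/
import Mathlib

section
/- The ideal of absolutely p-summing operators is maximal in the sense of local determination: for Banach spaces E, F and T ∈ L(E;F), T is absolutely p-summing if and only if sup{ π_p(Q_L ∘ T ∘ I_M) : M finite-dimensional subspace of E, L finite-codimensional closed subspace of F } is finite, and in that case π_p(T) equals this supremum. -/
set_option maxHeartbeats 1000000


/-- The weak `ℓ_p` norm of a finite sequence. -/
noncomputable def weakNormFin (𝕜 : Type*) [RCLike 𝕜] {E : Type*} [NormedAddCommGroup E]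
    [NormedSpace 𝕜 E] (p : ℝ) {n : ℕ} (x : Fin n → E) : ℝ :=
  ⨆ φ : {φ : E →L[𝕜] 𝕜 // ‖φ‖ ≤ 1}, (∑ j, ‖φ.1 (x j)‖ ^ p) ^ (1 / p)

/-- A linear map is absolutely `p`-summing: there is `C ≥ 0` with
`(∑ ‖T x_j‖^p)^{1/p} ≤ C · sup_{φ ∈ B_{E*}} (∑ |φ(x_j)|^p)^{1/p}` for all finite families. -/
def IsPSumming (𝕜 : Type*) [RCLike 𝕜] {E F : Type*} [NormedAddCommGroup E]
    [NormedSpace 𝕜 E] [SeminormedAddCommGroup F] [NormedSpace 𝕜 F] (p : ℝ)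
    (T : E →ₗ[𝕜] F) : Prop :=
  ∃ C : ℝ, 0 ≤ C ∧ ∀ (n : ℕ) (x : Fin n → E),
    (∑ j, ‖T (x j)‖ ^ p) ^ (1 / p) ≤ C * weakNormFin 𝕜 p x

/-- The `p`-summing norm `π_p(T)`: the least constant `C` in the defining inequality. -/
noncomputable def piNorm (𝕜 : Type*) [RCLike 𝕜] {E F : Type*} [NormedAddCommGroup E]
    [NormedSpace 𝕜 E] [SeminormedAddCommGroup F] [NormedSpace 𝕜 F] (p : ℝ)
    (T : E →ₗ[𝕜] F) : ℝ :=
  sInf {C : ℝ | 0 ≤ C ∧ ∀ (n : ℕ) (x : Fin n → E),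
    (∑ j, ‖T (x j)‖ ^ p) ^ (1 / p) ≤ C * weakNormFin 𝕜 p x}

/-- The set of local `p`-summing norms `π_p(Q_L ∘ T ∘ I_M)` where `M` runs over the
finite-dimensional subspaces of `E` and `L` over the finite-codimensional closed subspaces
of `F`. -/
noncomputable def localSet (𝕜 : Type*) [RCLike 𝕜] {E F : Type*} [NormedAddCommGroup E]
    [NormedSpace 𝕜 E] [NormedAddCommGroup F] [NormedSpace 𝕜 F] (p : ℝ)
    (T : E →L[𝕜] F) : Set ℝ :=
  {r : ℝ | ∃ (M : Submodule 𝕜 E) (L : Submodule 𝕜 F),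
    FiniteDimensional 𝕜 M ∧ IsClosed (L : Set F) ∧ FiniteDimensional 𝕜 (F ⧸ L) ∧
    r = piNorm 𝕜 p (L.mkQ.comp (T.toLinearMap.comp M.subtype))}

section Aux

variable {𝕜 : Type*} [RCLike 𝕜] {E : Type*} [NormedAddCommGroup E] [NormedSpace 𝕜 E] {p : ℝ}

instance unitBallNonempty : Nonempty {φ : E →L[𝕜] 𝕜 // ‖φ‖ ≤ 1} :=
  ⟨⟨0, by simp⟩⟩

lemma weakNormFin_bddAbove (hp : 1 ≤ p) {n : ℕ} (x : Fin n → E) :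
    BddAbove (Set.range fun φ : {φ : E →L[𝕜] 𝕜 // ‖φ‖ ≤ 1} =>
      (∑ j, ‖φ.1 (x j)‖ ^ p) ^ (1 / p)) := by
  refine ⟨(∑ j, ‖x j‖ ^ p) ^ (1 / p), ?_⟩
  rintro r ⟨φ, rfl⟩
  have hp0 : (0 : ℝ) < p := lt_of_lt_of_le one_pos hp
  refine Real.rpow_le_rpow (by positivity) ?_ (by positivity)
  refine Finset.sum_le_sum fun j _ => ?_
  refine Real.rpow_le_rpow (norm_nonneg _) ?_ hp0.le
  calc ‖φ.1 (x j)‖ ≤ ‖φ.1‖ * ‖x j‖ := φ.1.le_opNorm _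
    _ ≤ 1 * ‖x j‖ := by gcongr; exact φ.2
    _ = ‖x j‖ := one_mul _

lemma le_weakNormFin (hp : 1 ≤ p) {n : ℕ} (x : Fin n → E) (φ : E →L[𝕜] 𝕜) (hφ : ‖φ‖ ≤ 1) :
    (∑ j, ‖φ (x j)‖ ^ p) ^ (1 / p) ≤ weakNormFin 𝕜 p x :=
  le_ciSup (weakNormFin_bddAbove hp x) (⟨φ, hφ⟩ : {φ : E →L[𝕜] 𝕜 // ‖φ‖ ≤ 1})

lemma weakNormFin_nonneg (hp : 1 ≤ p) {n : ℕ} (x : Fin n → E) :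
    0 ≤ weakNormFin 𝕜 p x :=
  le_trans (by positivity) (le_weakNormFin hp x 0 (by simp))

/-- Composing with a norm-`≤ 1` operator does not increase the weak `ℓ_p` norm. -/
lemma weakNormFin_comp_le {E' : Type*} [NormedAddCommGroup E'] [NormedSpace 𝕜 E']
    (hp : 1 ≤ p) (U : E' →L[𝕜] E) (hU : ‖U‖ ≤ 1) {n : ℕ} (x : Fin n → E') :
    weakNormFin 𝕜 p (fun j => U (x j)) ≤ weakNormFin 𝕜 p x := by
  refine ciSup_le fun φ => ?_
  have hφU : ‖φ.1.comp U‖ ≤ 1 := by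
    refine le_trans (φ.1.opNorm_comp_le U) ?_
    calc ‖φ.1‖ * ‖U‖ ≤ 1 * 1 := by
          exact mul_le_mul φ.2 hU (norm_nonneg _) zero_le_one
      _ = 1 := one_mul 1
  exact le_weakNormFin hp x (φ.1.comp U) hφU

/-- Hahn–Banach: the weak norm of a family in a subspace is at most the weak norm of the
family viewed in the ambient space. -/
lemma weakNormFin_subtype_le (hp : 1 ≤ p) (M : Submodule 𝕜 E) {n : ℕ} (x : Fin n → M) :
    weakNormFin 𝕜 p x ≤ weakNormFin 𝕜 p (fun j => (x j : E)) := by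
  refine ciSup_le fun φ => ?_
  obtain ⟨g, hg_eq, hg_norm⟩ := exists_extension_norm_eq M φ.1
  have hg1 : ‖g‖ ≤ 1 := by rw [hg_norm]; exact φ.2
  refine le_trans (le_of_eq ?_) (le_weakNormFin hp (fun j => (x j : E)) g hg1)
  congr 1
  refine Finset.sum_congr rfl fun j _ => ?_
  rw [hg_eq (x j)]

variable {F : Type*} [SeminormedAddCommGroup F] [NormedSpace 𝕜 F]

lemma piNorm_nonneg (T : E →ₗ[𝕜] F) (hT : IsPSumming 𝕜 p T) : 0 ≤ piNorm 𝕜 p T :=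
  le_csInf hT fun _ hC => hC.1

lemma piNorm_spec (hp : 1 ≤ p) (T : E →ₗ[𝕜] F) (hT : IsPSumming 𝕜 p T) (n : ℕ) (x : Fin n → E) :
    (∑ j, ‖T (x j)‖ ^ p) ^ (1 / p) ≤ piNorm 𝕜 p T * weakNormFin 𝕜 p x := by
  have hw : 0 ≤ weakNormFin 𝕜 p x := weakNormFin_nonneg hp x
  rcases hw.eq_or_lt with hw0 | hw0
  · obtain ⟨C, hC0, hC⟩ := hT
    have := hC n x
    rw [← hw0, mul_zero] at this ⊢
    exact this
  · rw [← div_le_iff₀ hw0]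
    exact le_csInf hT fun C hC => (div_le_iff₀ hw0).2 (hC.2 n x)

lemma piNorm_le (T : E →ₗ[𝕜] F) {C : ℝ} (hC0 : 0 ≤ C)
    (h : ∀ (n : ℕ) (x : Fin n → E),
      (∑ j, ‖T (x j)‖ ^ p) ^ (1 / p) ≤ C * weakNormFin 𝕜 p x) :
    piNorm 𝕜 p T ≤ C :=
  csInf_le ⟨0, fun _ hD => hD.1⟩ ⟨hC0, h⟩

/-- Any linear map from a finite-dimensional space that is bounded is `p`-summing. -/
lemma isPSumming_of_finiteDimensional (hp : 1 ≤ p) {M : Type*} [NormedAddCommGroup M]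
    [NormedSpace 𝕜 M] [FiniteDimensional 𝕜 M] (S : M →ₗ[𝕜] F) {c : ℝ} (hc0 : 0 ≤ c)
    (hc : ∀ m, ‖S m‖ ≤ c * ‖m‖) : IsPSumming 𝕜 p S := by
  have hp0 : (0 : ℝ) < p := lt_of_lt_of_le one_pos hp
  set d := Module.finrank 𝕜 M with hd
  set b : Module.Basis (Fin d) 𝕜 M := Module.finBasis 𝕜 M with hb
  set f : Fin d → (M →L[𝕜] 𝕜) := fun i => LinearMap.toContinuousLinearMap (b.coord i) with hf
  set K : Fin d → ℝ := fun i => ‖f i‖ + 1 with hK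
  have hKpos : ∀ i, 0 < K i := fun i => by positivity
  set B : ℝ := (∑ i, (‖b i‖ * K i) ^ p) ^ (1 / p) with hB
  have hB0 : 0 ≤ B := by positivity
  refine ⟨c * (d : ℝ) * B, by positivity, fun n x => ?_⟩
  set w := weakNormFin 𝕜 p x with hw
  have hw0 : 0 ≤ w := weakNormFin_nonneg hp x
  -- pointwise norm bound via coordinates
  have hm_bound : ∀ m : M, ‖m‖ ^ p ≤ (d : ℝ) ^ p * ∑ i, (‖b i‖ * ‖f i m‖) ^ p := by
    intro m
    set A : ℝ := (∑ i, (‖b i‖ * ‖f i m‖) ^ p) ^ (1 / p) with hA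
    have hA0 : 0 ≤ A := by positivity
    have h1 : ‖m‖ ≤ ∑ i, ‖b i‖ * ‖f i m‖ := by
      conv_lhs => rw [← b.sum_repr m]
      refine le_trans (norm_sum_le _ _) (le_of_eq ?_)
      refine Finset.sum_congr rfl fun i _ => ?_
      rw [norm_smul, mul_comm]
      congr 1
    have h2 : ∀ i, ‖b i‖ * ‖f i m‖ ≤ A := by
      intro i
      have : (‖b i‖ * ‖f i m‖) ^ p ≤ ∑ i, (‖b i‖ * ‖f i m‖) ^ p :=
        Finset.single_le_sum (f := fun i => (‖b i‖ * ‖f i m‖) ^ p)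
          (fun i _ => by positivity) (Finset.mem_univ i)
      have h3 := Real.rpow_le_rpow (by positivity) this (by positivity : (0:ℝ) ≤ 1 / p)
      rw [one_div, Real.rpow_rpow_inv (by positivity) hp0.ne'] at h3
      rw [hA, one_div]
      exact h3
    have h4 : ‖m‖ ≤ (d : ℝ) * A := by
      refine le_trans h1 (le_trans (Finset.sum_le_card_nsmul _ _ A fun i _ => h2 i) ?_)
      simp [nsmul_eq_mul]
    have h5 : ‖m‖ ^ p ≤ ((d : ℝ) * A) ^ p :=
      Real.rpow_le_rpow (norm_nonneg _) h4 hp0.le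
    refine le_trans h5 (le_of_eq ?_)
    rw [Real.mul_rpow (by positivity) hA0, hA, one_div,
      Real.rpow_inv_rpow (by positivity) hp0.ne']
  -- coordinate functional bound
  have hcoord : ∀ i, ∑ j, ‖f i (x j)‖ ^ p ≤ (K i) ^ p * w ^ p := by
    intro i
    set φ : M →L[𝕜] 𝕜 := ((K i : 𝕜))⁻¹ • f i with hφ
    have hKnorm : ‖((K i : 𝕜))⁻¹‖ = (K i)⁻¹ := by
      rw [norm_inv, RCLike.norm_ofReal, abs_of_pos (hKpos i)]
    have happ : ∀ m : M, ‖φ m‖ = (K i)⁻¹ * ‖f i m‖ := by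
      intro m
      rw [hφ, ContinuousLinearMap.smul_apply, smul_eq_mul, norm_mul, norm_inv,
        RCLike.norm_ofReal, abs_of_pos (hKpos i)]
    have hφ1 : ‖φ‖ ≤ 1 := by
      refine ContinuousLinearMap.opNorm_le_bound _ zero_le_one fun m => ?_
      rw [happ m, one_mul, inv_mul_le_iff₀ (hKpos i)]
      calc ‖f i m‖ ≤ ‖f i‖ * ‖m‖ := (f i).le_opNorm m
        _ ≤ K i * ‖m‖ := by
            refine mul_le_mul_of_nonneg_right ?_ (norm_nonneg _)
            simp [hK, le_add_of_nonneg_right]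
    have h6 : (∑ j, ‖φ (x j)‖ ^ p) ^ (1 / p) ≤ w := le_weakNormFin hp x φ hφ1
    have h7 : ∑ j, ‖φ (x j)‖ ^ p ≤ w ^ p := by
      have := Real.rpow_le_rpow (by positivity) h6 hp0.le
      rwa [one_div, Real.rpow_inv_rpow (by positivity) hp0.ne'] at this
    have h8 : ∀ j, ‖f i (x j)‖ ^ p = (K i) ^ p * ‖φ (x j)‖ ^ p := by
      intro j
      rw [happ (x j), Real.mul_rpow (by positivity) (norm_nonneg _),
        ← mul_assoc, ← Real.mul_rpow (hKpos i).le (by positivity),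
        mul_inv_cancel₀ (hKpos i).ne', Real.one_rpow, one_mul]
    calc ∑ j, ‖f i (x j)‖ ^ p = ∑ j, (K i) ^ p * ‖φ (x j)‖ ^ p := by
          exact Finset.sum_congr rfl fun j _ => h8 j
      _ = (K i) ^ p * ∑ j, ‖φ (x j)‖ ^ p := by rw [Finset.mul_sum]
      _ ≤ (K i) ^ p * w ^ p := by
          refine mul_le_mul_of_nonneg_left h7 (by positivity)
  -- assemble
  have main : ∑ j, ‖S (x j)‖ ^ p ≤ (c * (d : ℝ) * B) ^ p * w ^ p := by
    have step1 : ∑ j, ‖S (x j)‖ ^ p ≤ c ^ p * ∑ j, ‖x j‖ ^ p := by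
      rw [Finset.mul_sum]
      refine Finset.sum_le_sum fun j _ => ?_
      calc ‖S (x j)‖ ^ p ≤ (c * ‖x j‖) ^ p :=
            Real.rpow_le_rpow (norm_nonneg _) (hc (x j)) hp0.le
        _ = c ^ p * ‖x j‖ ^ p := Real.mul_rpow hc0 (norm_nonneg _)
    have step2 : ∑ j, ‖x j‖ ^ p ≤ (d : ℝ) ^ p * ∑ i, (‖b i‖ * K i) ^ p * w ^ p := by
      calc ∑ j, ‖x j‖ ^ p ≤ ∑ j, (d : ℝ) ^ p * ∑ i, (‖b i‖ * ‖f i (x j)‖) ^ p :=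
            Finset.sum_le_sum fun j _ => hm_bound (x j)
        _ = (d : ℝ) ^ p * ∑ i, ∑ j, (‖b i‖ * ‖f i (x j)‖) ^ p := by
            rw [← Finset.mul_sum, Finset.sum_comm]
        _ ≤ (d : ℝ) ^ p * ∑ i, (‖b i‖ * K i) ^ p * w ^ p := by
            refine mul_le_mul_of_nonneg_left (Finset.sum_le_sum fun i _ => ?_) (by positivity)
            calc ∑ j, (‖b i‖ * ‖f i (x j)‖) ^ p
                = ‖b i‖ ^ p * ∑ j, ‖f i (x j)‖ ^ p := by
                  rw [Finset.mul_sum]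
                  exact Finset.sum_congr rfl fun j _ =>
                    Real.mul_rpow (norm_nonneg _) (norm_nonneg _)
              _ ≤ ‖b i‖ ^ p * ((K i) ^ p * w ^ p) :=
                  mul_le_mul_of_nonneg_left (hcoord i) (by positivity)
              _ = (‖b i‖ * K i) ^ p * w ^ p := by
                  rw [Real.mul_rpow (norm_nonneg _) (hKpos i).le, mul_assoc]
    have hBp : B ^ p = ∑ i, (‖b i‖ * K i) ^ p := by
      rw [hB, one_div, Real.rpow_inv_rpow (by positivity) hp0.ne']
    calc ∑ j, ‖S (x j)‖ ^ p ≤ c ^ p * ((d : ℝ) ^ p * ∑ i, (‖b i‖ * K i) ^ p * w ^ p) :=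
          le_trans step1 (mul_le_mul_of_nonneg_left step2 (by positivity))
      _ = (c * (d : ℝ) * B) ^ p * w ^ p := by
          have hsplit : (c * (d : ℝ) * B) ^ p = c ^ p * (d : ℝ) ^ p * B ^ p := by
            rw [Real.mul_rpow (mul_nonneg hc0 (Nat.cast_nonneg d)) hB0,
              Real.mul_rpow hc0 (Nat.cast_nonneg d)]
          rw [hsplit, ← Finset.sum_mul, ← hBp]
          ring
  have hmw : (c * (d : ℝ) * B) ^ p * w ^ p = ((c * (d : ℝ) * B) * w) ^ p :=
    (Real.mul_rpow (by positivity) hw0).symm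
  have hfin := Real.rpow_le_rpow (by positivity) main (by positivity : (0:ℝ) ≤ 1 / p)
  rw [hmw, one_div, Real.rpow_rpow_inv (by positivity) hp0.ne'] at hfin
  rw [one_div]
  exact hfin

/-- A norm-one functional vanishing on `L` is dominated by the quotient seminorm. -/
lemma norm_apply_le_quotient_norm {F : Type*} [NormedAddCommGroup F] [NormedSpace 𝕜 F]
    (L : Submodule 𝕜 F) (ψ : F →L[𝕜] 𝕜) (hψ : ‖ψ‖ ≤ 1) (hL : ∀ m ∈ L, ψ m = 0) (y : F) :
    ‖ψ y‖ ≤ ‖(Submodule.Quotient.mk y : F ⧸ L)‖ := by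
  refine le_of_forall_pos_le_add fun ε hε => ?_
  obtain ⟨m, hm, hm'⟩ := Submodule.Quotient.norm_mk_lt (Submodule.Quotient.mk y : F ⧸ L) hε
  have hmem : m - y ∈ L := (Submodule.Quotient.eq L).1 hm
  have : ψ m = ψ y := by
    have h0 := hL _ hmem
    rw [map_sub, sub_eq_zero] at h0
    exact h0
  calc ‖ψ y‖ = ‖ψ m‖ := by rw [this]
    _ ≤ ‖ψ‖ * ‖m‖ := ψ.le_opNorm m
    _ ≤ 1 * ‖m‖ := mul_le_mul_of_nonneg_right hψ (norm_nonneg _)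
    _ = ‖m‖ := one_mul _
    _ ≤ ‖(Submodule.Quotient.mk y : F ⧸ L)‖ + ε := hm'.le

end Aux

/-- The ideal of absolutely `p`-summing operators is maximal (local determination):
`T` is `p`-summing iff `sup { π_p(Q_L ∘ T ∘ I_M) }` over finite-dimensional `M ⊆ E` and
finite-codimensional closed `L ⊆ F` is finite, and then `π_p(T)` equals this supremum. -/
theorem stmt_17 {𝕜 : Type*} [RCLike 𝕜] {E F : Type*} [NormedAddCommGroup E] [NormedSpace 𝕜 E]
    [NormedAddCommGroup F] [NormedSpace 𝕜 F] [CompleteSpace E] [CompleteSpace F]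
    (p : ℝ) (hp : 1 ≤ p) (T : E →L[𝕜] F) :
    (IsPSumming 𝕜 p T.toLinearMap ↔ BddAbove (localSet 𝕜 p T)) ∧
      (IsPSumming 𝕜 p T.toLinearMap →
        piNorm 𝕜 p T.toLinearMap = sSup (localSet 𝕜 p T)) := by
  have hp0 : (0 : ℝ) < p := lt_of_lt_of_le one_pos hp
  -- `0` belongs to the local set (take `M = ⊥`, `L = ⊤`).
  have h0mem : (0 : ℝ) ∈ localSet 𝕜 p T := by
    haveI : Subsingleton (F ⧸ (⊤ : Submodule 𝕜 F)) :=
      Submodule.Quotient.subsingleton_iff.mpr rfl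
    refine ⟨⊥, ⊤, inferInstance, by simp, inferInstance, ?_⟩
    set S0 := (⊤ : Submodule 𝕜 F).mkQ.comp (T.toLinearMap.comp (⊥ : Submodule 𝕜 E).subtype)
      with hS0def
    have hS0 : ∀ y, S0 y = 0 := fun y => Subsingleton.elim _ _
    have hzero : ∀ (n : ℕ) (x : Fin n → (⊥ : Submodule 𝕜 E)),
        (∑ j, ‖S0 (x j)‖ ^ p) ^ (1 / p) ≤ 0 * weakNormFin 𝕜 p x := by
      intro n x
      have hz : (∑ j, ‖S0 (x j)‖ ^ p) = 0 :=
        Finset.sum_eq_zero fun j _ => by rw [hS0, norm_zero, Real.zero_rpow hp0.ne']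
      rw [hz, Real.zero_rpow (one_div_ne_zero hp0.ne'), zero_mul]
    exact (le_antisymm (piNorm_le S0 le_rfl hzero)
      (piNorm_nonneg S0 ⟨0, le_rfl, hzero⟩)).symm
  -- every element of the local set is at most `π_p(T)`
  have hub : IsPSumming 𝕜 p T.toLinearMap →
      ∀ r ∈ localSet 𝕜 p T, r ≤ piNorm 𝕜 p T.toLinearMap := by
    intro hT r hr
    obtain ⟨M, L, hM, hL, hFL, rfl⟩ := hr
    refine piNorm_le _ (piNorm_nonneg _ hT) fun n x => ?_
    calc (∑ j, ‖(L.mkQ.comp (T.toLinearMap.comp M.subtype)) (x j)‖ ^ p) ^ (1 / p)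
        ≤ (∑ j, ‖T.toLinearMap ((x j : E))‖ ^ p) ^ (1 / p) := by
          refine Real.rpow_le_rpow (by positivity) (Finset.sum_le_sum fun j _ => ?_)
            (by positivity)
          refine Real.rpow_le_rpow (norm_nonneg _) ?_ hp0.le
          exact Submodule.Quotient.norm_mk_le _ _
      _ ≤ piNorm 𝕜 p T.toLinearMap * weakNormFin 𝕜 p (fun j => ((x j : E))) :=
          piNorm_spec hp _ hT n _
      _ ≤ piNorm 𝕜 p T.toLinearMap * weakNormFin 𝕜 p x := by
          refine mul_le_mul_of_nonneg_left ?_ (piNorm_nonneg _ hT)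
          exact weakNormFin_comp_le hp M.subtypeL (Submodule.norm_subtypeL_le M) x
  -- key estimate: the supremum of the local set is a `p`-summing constant for `T`
  have key : BddAbove (localSet 𝕜 p T) → ∀ (n : ℕ) (x : Fin n → E),
      (∑ j, ‖T.toLinearMap (x j)‖ ^ p) ^ (1 / p) ≤
        sSup (localSet 𝕜 p T) * weakNormFin 𝕜 p x := by
    intro hBdd n x
    choose ψ hψ1 hψ2 using fun j => exists_dual_vector'' 𝕜 (T (x j))
    set Φ : F →L[𝕜] (Fin n → 𝕜) := ContinuousLinearMap.pi ψ with hΦ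
    set L : Submodule 𝕜 F := LinearMap.ker (Φ : F →ₗ[𝕜] (Fin n → 𝕜)) with hLdef
    have hLclosed : IsClosed (L : Set F) := ContinuousLinearMap.isClosed_ker Φ
    haveI hFL : FiniteDimensional 𝕜 (F ⧸ L) := by
      have e := LinearMap.quotKerEquivRange (Φ : F →ₗ[𝕜] (Fin n → 𝕜))
      have hker : L = LinearMap.ker (Φ : F →ₗ[𝕜] (Fin n → 𝕜)) := rfl
      rw [hker]
      exact Module.Finite.equiv e.symm
    set M : Submodule 𝕜 E := Submodule.span 𝕜 (Set.range x) with hM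
    haveI hMfd : FiniteDimensional 𝕜 M :=
      FiniteDimensional.span_of_finite 𝕜 (Set.finite_range x)
    set S := L.mkQ.comp (T.toLinearMap.comp M.subtype) with hS
    have hmem : piNorm 𝕜 p S ∈ localSet 𝕜 p T := ⟨M, L, hMfd, hLclosed, hFL, rfl⟩
    have hSle : ∀ m : M, ‖S m‖ ≤ ‖T‖ * ‖m‖ := fun m =>
      le_trans (Submodule.Quotient.norm_mk_le _ _) (T.le_opNorm m)
    have hSsum : IsPSumming 𝕜 p S :=
      isPSumming_of_finiteDimensional hp S (norm_nonneg T) hSle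
    set x' : Fin n → M := fun j => ⟨x j, Submodule.subset_span ⟨j, rfl⟩⟩ with hx'
    have h1 : ∀ j, ‖T.toLinearMap (x j)‖ ≤ ‖S (x' j)‖ := by
      intro j
      have hker : ∀ m ∈ L, ψ j m = 0 := by
        intro m hm
        have hm0 : Φ m = 0 := hm
        have := congrFun hm0 j
        simpa [hΦ] using this
      have hle := norm_apply_le_quotient_norm L (ψ j) (hψ1 j) hker (T (x j))
      have heq : ‖ψ j (T (x j))‖ = ‖T (x j)‖ := by
        rw [hψ2 j, RCLike.norm_ofReal, abs_norm]
      rw [heq] at hle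
      exact hle
    calc (∑ j, ‖T.toLinearMap (x j)‖ ^ p) ^ (1 / p)
        ≤ (∑ j, ‖S (x' j)‖ ^ p) ^ (1 / p) := by
          refine Real.rpow_le_rpow (by positivity) (Finset.sum_le_sum fun j _ => ?_)
            (by positivity)
          exact Real.rpow_le_rpow (norm_nonneg _) (h1 j) hp0.le
      _ ≤ piNorm 𝕜 p S * weakNormFin 𝕜 p x' := piNorm_spec hp S hSsum n x'
      _ ≤ piNorm 𝕜 p S * weakNormFin 𝕜 p (fun j => ((x' j : E))) :=
          mul_le_mul_of_nonneg_left (weakNormFin_subtype_le hp M x') (piNorm_nonneg S hSsum)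
      _ = piNorm 𝕜 p S * weakNormFin 𝕜 p x := rfl
      _ ≤ sSup (localSet 𝕜 p T) * weakNormFin 𝕜 p x :=
          mul_le_mul_of_nonneg_right (le_csSup hBdd hmem) (weakNormFin_nonneg hp x)
  constructor
  · constructor
    · intro hT
      exact ⟨piNorm 𝕜 p T.toLinearMap, fun r hr => hub hT r hr⟩
    · intro hBdd
      exact ⟨sSup (localSet 𝕜 p T), le_csSup hBdd h0mem, key hBdd⟩
  · intro hT
    have hBdd : BddAbove (localSet 𝕜 p T) :=
      ⟨piNorm 𝕜 p T.toLinearMap, fun r hr => hub hT r hr⟩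
    refine le_antisymm ?_ ?_
    · exact piNorm_le _ (le_csSup hBdd h0mem) (key hBdd)
    · exact csSup_le ⟨0, h0mem⟩ fun r hr => hub hT r hr
end

section
/- The dual of the class of weakly p-summable sequences is the class of Cohen strongly p*-summable sequences: for 1 < p < ∞ with 1/p + 1/p* = 1 and any Banach space E, a sequence (x_j) in E satisfies sup_{(φ_j) ∈ B_{ℓ_p^w(E*)}} Σ_j |φ_j(x_j)| < ∞ if and only if (x_j) is Cohen strongly p*-summable, i.e. Σ_j |φ_j(x_j)| < ∞ for all weakly p-summable (φ_j) in E*, and the two natural norms coincide. -/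
open scoped ENNReal

/-- A sequence `x` in `E` is weakly `p`-summable. -/
def WeaklySummable (𝕜 : Type*) [RCLike 𝕜] {E : Type*} [NormedAddCommGroup E]
    [NormedSpace 𝕜 E] (p : ℝ) (x : ℕ → E) : Prop :=
  ∀ φ : E →L[𝕜] 𝕜, Summable fun j => ‖φ (x j)‖ ^ p

/-- The weak `ℓ_p` norm of a sequence. -/
noncomputable def weakNorm (𝕜 : Type*) [RCLike 𝕜] {E : Type*} [NormedAddCommGroup E]
    [NormedSpace 𝕜 E] (p : ℝ) (x : ℕ → E) : ℝ :=
  ⨆ φ : {φ : E →L[𝕜] 𝕜 // ‖φ‖ ≤ 1}, (∑' j, ‖φ.1 (x j)‖ ^ p) ^ (1 / p)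

/-- The Cohen-type pairing set: partial sums `∑_{j<n} |φ_j(x_j)|` with `(φ_j)` in the unit
ball of `ℓ_p^w(E*)`; its supremum is the Cohen strong `p*`-norm of `x`. -/
def cohenSet (𝕜 : Type*) [RCLike 𝕜] {E : Type*} [NormedAddCommGroup E]
    [NormedSpace 𝕜 E] (p : ℝ) (x : ℕ → E) : Set ℝ :=
  {r : ℝ | ∃ φ : ℕ → (E →L[𝕜] 𝕜), WeaklySummable 𝕜 p φ ∧ weakNorm 𝕜 p φ ≤ 1 ∧
    ∃ n : ℕ, r = ∑ j ∈ Finset.range n, ‖(φ j) (x j)‖}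

/-- The dual-class pairing set: partial sums `|∑_{j<n} φ_j(x_j)|` with `(φ_j)` in the unit
ball of `ℓ_p^w(E*)`; its supremum is the `(ℓ_p^w)^{dual}`-norm of `x`. -/
def dualSet (𝕜 : Type*) [RCLike 𝕜] {E : Type*} [NormedAddCommGroup E]
    [NormedSpace 𝕜 E] (p : ℝ) (x : ℕ → E) : Set ℝ :=
  {r : ℝ | ∃ φ : ℕ → (E →L[𝕜] 𝕜), WeaklySummable 𝕜 p φ ∧ weakNorm 𝕜 p φ ≤ 1 ∧
    ∃ n : ℕ, r = ‖∑ j ∈ Finset.range n, (φ j) (x j)‖}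

/-! ### Auxiliary material -/

/-- The "sign" of a scalar: a unimodular scalar `u` with `u * z = ‖z‖`. -/
noncomputable def signK {𝕜 : Type*} [RCLike 𝕜] (z : 𝕜) : 𝕜 :=
  if z = 0 then 1 else (‖z‖ : 𝕜) / z

lemma signK_norm {𝕜 : Type*} [RCLike 𝕜] (z : 𝕜) : ‖signK z‖ = 1 := by
  unfold signK
  split_ifs with h
  · simp
  · rw [norm_div, RCLike.norm_ofReal, abs_of_nonneg (norm_nonneg z),
      div_self (norm_ne_zero_iff.mpr h)]

lemma signK_mul {𝕜 : Type*} [RCLike 𝕜] (z : 𝕜) : signK z * z = (‖z‖ : 𝕜) := by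
  unfold signK
  split_ifs with h
  · simp [h]
  · rw [div_mul_cancel₀ _ h]

section aux
variable {𝕜 : Type*} [RCLike 𝕜]

/-- `lp.single` as a continuous linear map. -/
noncomputable def lpSingleCLM (pe : ℝ≥0∞) [Fact (1 ≤ pe)] (hpe : 0 < pe.toReal) (i : ℕ) :
    𝕜 →L[𝕜] lp (fun _ : ℕ => 𝕜) pe :=
  LinearMap.mkContinuous
    { toFun := fun a => lp.single pe i a
      map_add' := by
        intro a b
        refine lp.ext (funext fun j => ?_)
        by_cases h : j = i
        · subst h; simp [lp.single_apply_self]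
        · simp [lp.single_apply_ne pe i _ h]
      map_smul' := fun c a => by simpa using (lp.single_smul (E := fun _ : ℕ => 𝕜) pe i c a) }
    1 (fun a => by
      simpa using (lp.norm_single (E := fun _ : ℕ => 𝕜) (p := pe) (zero_lt_one.trans_le (Fact.out : 1 ≤ pe)) i a).le)

@[simp] lemma lpSingleCLM_apply (pe : ℝ≥0∞) [Fact (1 ≤ pe)] (hpe : 0 < pe.toReal) (i : ℕ)
    (a : 𝕜) : lpSingleCLM pe hpe i a = lp.single pe i a := rfl

variable {F : Type*} [NormedAddCommGroup F] [NormedSpace 𝕜 F]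

/-- Uniform boundedness: a weakly `p`-summable sequence has finite weak norm. -/
lemma weaklySummable_bound {p : ℝ} (hp : 1 < p) {φ : ℕ → F} (h : WeaklySummable 𝕜 p φ) :
    ∃ M : ℝ, 0 ≤ M ∧ ∀ Φ : F →L[𝕜] 𝕜, (∑' j, ‖Φ (φ j)‖ ^ p) ^ (1 / p) ≤ M * ‖Φ‖ := by
  have hp0 : 0 < p := lt_trans one_pos hp
  set pe : ℝ≥0∞ := ENNReal.ofReal p with hpe_def
  haveI : Fact (1 ≤ pe) := ⟨by simpa [hpe_def] using ENNReal.one_le_ofReal.mpr hp.le⟩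
  have htp : pe.toReal = p := ENNReal.toReal_ofReal hp0.le
  have hpe : 0 < pe.toReal := by rw [htp]; exact hp0
  set g : ℕ → ((F →L[𝕜] 𝕜) →L[𝕜] lp (fun _ : ℕ => 𝕜) pe) := fun n =>
    ∑ j ∈ Finset.range n,
      (lpSingleCLM pe hpe j).comp (ContinuousLinearMap.apply 𝕜 𝕜 (φ j)) with hg_def
  have hg : ∀ (n : ℕ) (Φ : F →L[𝕜] 𝕜),
      g n Φ = ∑ j ∈ Finset.range n, lp.single pe j (Φ (φ j)) := by
    intro n Φ
    simp [hg_def]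
  have hgnorm : ∀ (n : ℕ) (Φ : F →L[𝕜] 𝕜),
      ‖g n Φ‖ = (∑ j ∈ Finset.range n, ‖Φ (φ j)‖ ^ p) ^ (1 / p) := by
    intro n Φ
    have h1 : ‖g n Φ‖ ^ p = ∑ j ∈ Finset.range n, ‖Φ (φ j)‖ ^ p := by
      have h2 := lp.norm_sum_single (p := pe) hpe (fun j => Φ (φ j)) (Finset.range n)
      rw [htp] at h2
      rw [hg n Φ]; exact h2
    rw [← h1, one_div, Real.rpow_rpow_inv (norm_nonneg _) hp0.ne']
  have hpt : ∀ Φ : F →L[𝕜] 𝕜, ∃ C, ∀ n, ‖g n Φ‖ ≤ C := by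
    intro Φ
    refine ⟨(∑' j, ‖Φ (φ j)‖ ^ p) ^ (1 / p), fun n => ?_⟩
    rw [hgnorm]
    exact Real.rpow_le_rpow
      (Finset.sum_nonneg fun j _ => Real.rpow_nonneg (norm_nonneg _) p)
      (Summable.sum_le_tsum _ (fun j _ => Real.rpow_nonneg (norm_nonneg _) p) (h Φ)) (by positivity)
  obtain ⟨C, hC⟩ := banach_steinhaus hpt
  refine ⟨max C 0, le_max_right _ _, fun Φ => ?_⟩
  have key : ∀ n, ∑ j ∈ Finset.range n, ‖Φ (φ j)‖ ^ p ≤ (max C 0 * ‖Φ‖) ^ p := by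
    intro n
    have h1 : ‖g n Φ‖ ≤ max C 0 * ‖Φ‖ :=
      le_trans ((g n).le_opNorm Φ)
        (mul_le_mul_of_nonneg_right ((hC n).trans (le_max_left C 0)) (norm_nonneg _))
    have h2 : (∑ j ∈ Finset.range n, ‖Φ (φ j)‖ ^ p) ^ (1 / p) ≤ max C 0 * ‖Φ‖ := by
      rw [← hgnorm]; exact h1
    have h3 := Real.rpow_le_rpow (Real.rpow_nonneg
      (Finset.sum_nonneg fun j _ => Real.rpow_nonneg (norm_nonneg _) p) _) h2 hp0.le
    rwa [one_div, Real.rpow_inv_rpow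
      (Finset.sum_nonneg fun j _ => Real.rpow_nonneg (norm_nonneg _) p) hp0.ne'] at h3
  have h4 : ∑' j, ‖Φ (φ j)‖ ^ p ≤ (max C 0 * ‖Φ‖) ^ p :=
    Real.tsum_le_of_sum_range_le (fun j => Real.rpow_nonneg (norm_nonneg _) p) key
  calc (∑' j, ‖Φ (φ j)‖ ^ p) ^ (1 / p)
      ≤ ((max C 0 * ‖Φ‖) ^ p) ^ (1 / p) :=
        Real.rpow_le_rpow (tsum_nonneg fun j => Real.rpow_nonneg (norm_nonneg _) p) h4
          (by positivity)
    _ = max C 0 * ‖Φ‖ := by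
        rw [one_div, Real.rpow_rpow_inv (by positivity) hp0.ne']

/-- For a weakly summable sequence with weak norm at most `1`, the natural dual bound. -/
lemma term_bound {p : ℝ} (hp : 1 < p) {φ : ℕ → F} (h : WeaklySummable 𝕜 p φ)
    (hn : weakNorm 𝕜 p φ ≤ 1) (Φ : F →L[𝕜] 𝕜) :
    (∑' j, ‖Φ (φ j)‖ ^ p) ^ (1 / p) ≤ ‖Φ‖ := by
  have hp0 : 0 < p := lt_trans one_pos hp
  obtain ⟨M, hM0, hM⟩ := weaklySummable_bound hp h
  have hbdd : BddAbove (Set.range fun Φ : {Φ : F →L[𝕜] 𝕜 // ‖Φ‖ ≤ 1} =>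
      (∑' j, ‖Φ.1 (φ j)‖ ^ p) ^ (1 / p)) := by
    refine ⟨M, ?_⟩
    rintro r ⟨Ψ, rfl⟩
    exact le_trans (hM Ψ.1) (by
      have := mul_le_mul_of_nonneg_left Ψ.2 hM0
      simpa using this)
  by_cases hΦ : Φ = 0
  · subst hΦ
    simp [Real.zero_rpow hp0.ne', one_div, Real.zero_rpow (inv_ne_zero hp0.ne')]
  · have hΦ0 : (0:ℝ) < ‖Φ‖ := norm_pos_iff.mpr hΦ
    set Ψ : F →L[𝕜] 𝕜 := ((‖Φ‖⁻¹ : ℝ) : 𝕜) • Φ with hΨ_def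
    have hΨnorm : ‖Ψ‖ ≤ 1 := by
      rw [hΨ_def, norm_smul ((‖Φ‖⁻¹ : ℝ) : 𝕜) Φ, RCLike.norm_ofReal,
        abs_of_nonneg (by positivity), inv_mul_cancel₀ hΦ0.ne']
    have hle : (∑' j, ‖Ψ (φ j)‖ ^ p) ^ (1 / p) ≤ 1 :=
      le_trans (le_ciSup hbdd ⟨Ψ, hΨnorm⟩) hn
    have heq : (∑' j, ‖Ψ (φ j)‖ ^ p) ^ (1 / p)
        = ‖Φ‖⁻¹ * (∑' j, ‖Φ (φ j)‖ ^ p) ^ (1 / p) := by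
      have h1 : ∀ j, ‖Ψ (φ j)‖ ^ p = ‖Φ‖⁻¹ ^ p * ‖Φ (φ j)‖ ^ p := by
        intro j
        rw [hΨ_def, ContinuousLinearMap.smul_apply,
          norm_smul ((‖Φ‖⁻¹ : ℝ) : 𝕜) (Φ (φ j)), RCLike.norm_ofReal,
          abs_of_nonneg (by positivity), Real.mul_rpow (by positivity) (norm_nonneg _)]
      rw [tsum_congr h1, tsum_mul_left,
        Real.mul_rpow (by positivity) (tsum_nonneg fun j => Real.rpow_nonneg (norm_nonneg _) p),
        one_div, Real.rpow_rpow_inv (by positivity) hp0.ne']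
    rw [heq] at hle
    calc (∑' j, ‖Φ (φ j)‖ ^ p) ^ (1 / p)
        = ‖Φ‖ * (‖Φ‖⁻¹ * (∑' j, ‖Φ (φ j)‖ ^ p) ^ (1 / p)) := by
          field_simp
      _ ≤ ‖Φ‖ * 1 := mul_le_mul_of_nonneg_left hle hΦ0.le
      _ = ‖Φ‖ := mul_one _

/-- The `ℓ_p` bound on the tsum, unexponentiated form. -/
lemma term_bound' {p : ℝ} (hp : 1 < p) {φ : ℕ → F} (h : WeaklySummable 𝕜 p φ)
    (hn : weakNorm 𝕜 p φ ≤ 1) (Φ : F →L[𝕜] 𝕜) :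
    ∑' j, ‖Φ (φ j)‖ ^ p ≤ ‖Φ‖ ^ p := by
  have hp0 : 0 < p := lt_trans one_pos hp
  have h1 := term_bound hp h hn Φ
  have h2 := Real.rpow_le_rpow (Real.rpow_nonneg
    (tsum_nonneg fun j => Real.rpow_nonneg (norm_nonneg _) p) _) h1 hp0.le
  rwa [one_div, Real.rpow_inv_rpow
    (tsum_nonneg fun j => Real.rpow_nonneg (norm_nonneg _) p) hp0.ne'] at h2

/-- Entries of a weakly summable sequence with weak norm `≤ 1` have norm `≤ 1`. -/
lemma entry_norm_le {p : ℝ} (hp : 1 < p) {φ : ℕ → F} (h : WeaklySummable 𝕜 p φ)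
    (hn : weakNorm 𝕜 p φ ≤ 1) (j : ℕ) : ‖φ j‖ ≤ 1 := by
  have hp0 : 0 < p := lt_trans one_pos hp
  refine NormedSpace.norm_le_dual_bound 𝕜 (φ j) zero_le_one fun Φ => ?_
  have h1 : ‖Φ (φ j)‖ = (‖Φ (φ j)‖ ^ p) ^ (1 / p) := by
    rw [one_div, Real.rpow_rpow_inv (norm_nonneg _) hp0.ne']
  have h2 : ‖Φ (φ j)‖ ^ p ≤ ∑' i, ‖Φ (φ i)‖ ^ p :=
    Summable.le_tsum (h Φ) j fun i _ => Real.rpow_nonneg (norm_nonneg _) p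
  rw [h1, one_mul]
  exact le_trans (Real.rpow_le_rpow (Real.rpow_nonneg (norm_nonneg _) p) h2 (by positivity))
    (term_bound hp h hn Φ)

end aux

set_option maxHeartbeats 2000000 in
/-- The dual of the class of weakly `p`-summable sequences is the class of Cohen strongly
`p*`-summable sequences (`1 < p < ∞`, `1/p + 1/p* = 1`):
`sup_{(φ_j) ∈ B_{ℓ_p^w(E*)}} ∑_j |φ_j(x_j)| < ∞` iff `x` is Cohen strongly `p*`-summable
(i.e. `∑_j |φ_j(x_j)| < ∞` for all weakly `p`-summable `(φ_j)` in `E*`), and the two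
natural norms coincide. -/
theorem stmt_19 {𝕜 : Type*} [RCLike 𝕜] {E : Type*} [NormedAddCommGroup E]
    [NormedSpace 𝕜 E] [CompleteSpace E] (p q : ℝ) (hp : 1 < p)
    (hpq : 1 / p + 1 / q = 1) (x : ℕ → E) :
    (BddAbove (cohenSet 𝕜 p x) ↔
        ∀ φ : ℕ → (E →L[𝕜] 𝕜), WeaklySummable 𝕜 p φ →
          Summable fun j => ‖(φ j) (x j)‖) ∧
      sSup (cohenSet 𝕜 p x) = sSup (dualSet 𝕜 p x) := by
  have hp0 : 0 < p := lt_trans one_pos hp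
  haveI hne : Nonempty {Φ : (E →L[𝕜] 𝕜) →L[𝕜] 𝕜 // ‖Φ‖ ≤ 1} :=
    ⟨⟨0, by
      rw [ContinuousLinearMap.opNorm_zero]
      exact zero_le_one⟩⟩
  -- the zero sequence belongs to both classes
  have hws0 : WeaklySummable 𝕜 p (fun _ : ℕ => (0 : E →L[𝕜] 𝕜)) := by
    intro Φ
    have hz : (fun j : ℕ => ‖Φ ((fun _ : ℕ => (0 : E →L[𝕜] 𝕜)) j)‖ ^ p)
        = fun _ : ℕ => (0:ℝ) := by
      funext j; simp [Real.zero_rpow hp0.ne']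
    rw [hz]; exact summable_zero
  have hwn0 : weakNorm 𝕜 p (fun _ : ℕ => (0 : E →L[𝕜] 𝕜)) ≤ 1 := by
    refine ciSup_le fun Φ => ?_
    simp [Real.zero_rpow hp0.ne', one_div, Real.zero_rpow (inv_ne_zero hp0.ne')]
  have h0c : (0:ℝ) ∈ cohenSet 𝕜 p x := ⟨fun _ => 0, hws0, hwn0, 0, by simp⟩
  have h0d : (0:ℝ) ∈ dualSet 𝕜 p x := ⟨fun _ => 0, hws0, hwn0, 0, by simp⟩
  -- cohenSet is contained in dualSet (sign trick)
  have hsub : cohenSet 𝕜 p x ⊆ dualSet 𝕜 p x := by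
    rintro r ⟨φ, hws, hwn, n, rfl⟩
    refine ⟨fun j => signK (φ j (x j)) • φ j, ?_, ?_, n, ?_⟩
    · intro Φ
      have heq : ∀ j, ‖Φ (signK (φ j (x j)) • φ j)‖ ^ p = ‖Φ (φ j)‖ ^ p := by
        intro j
        rw [map_smul, norm_smul (signK (φ j (x j))) (Φ (φ j)), signK_norm, one_mul]
      exact (hws Φ).congr fun j => (heq j).symm
    · calc weakNorm 𝕜 p (fun j => signK (φ j (x j)) • φ j) = weakNorm 𝕜 p φ := by
            unfold weakNorm
            refine iSup_congr fun Φ => ?_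
            congr 1
            refine tsum_congr fun j => ?_
            rw [map_smul, norm_smul (signK (φ j (x j))) (Φ.1 (φ j)), signK_norm, one_mul]
        _ ≤ 1 := hwn
    · have heval : ∀ j, (signK (φ j (x j)) • φ j) (x j) = ((‖φ j (x j)‖ : ℝ) : 𝕜) := by
        intro j
        rw [ContinuousLinearMap.smul_apply, smul_eq_mul, signK_mul]
      rw [Finset.sum_congr rfl fun j _ => heval j, ← RCLike.ofReal_sum,
        RCLike.norm_ofReal, abs_of_nonneg (Finset.sum_nonneg fun j _ => norm_nonneg _)]
  -- every element of dualSet is dominated by an element of cohenSet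
  have hdle : ∀ r ∈ dualSet 𝕜 p x, ∃ r' ∈ cohenSet 𝕜 p x, r ≤ r' := by
    rintro r ⟨φ, hws, hwn, n, rfl⟩
    exact ⟨_, ⟨φ, hws, hwn, n, rfl⟩, norm_sum_le _ _⟩
  have hsup : sSup (cohenSet 𝕜 p x) = sSup (dualSet 𝕜 p x) := by
    by_cases hb : BddAbove (dualSet 𝕜 p x)
    · refine le_antisymm (csSup_le_csSup hb ⟨0, h0c⟩ hsub) ?_
      refine csSup_le ⟨0, h0d⟩ fun r hr => ?_
      obtain ⟨r', hr', hle⟩ := hdle r hr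
      exact hle.trans (le_csSup (hb.mono hsub) hr')
    · have hbc : ¬ BddAbove (cohenSet 𝕜 p x) := by
        intro hcb
        obtain ⟨C, hC⟩ := hcb
        refine hb ⟨C, fun r hr => ?_⟩
        obtain ⟨r', hr', hle⟩ := hdle r hr
        exact hle.trans (hC hr')
      rw [Real.sSup_of_not_bddAbove hbc, Real.sSup_of_not_bddAbove hb]
  refine ⟨⟨?_, ?_⟩, hsup⟩
  · -- forward direction
    rintro ⟨C, hC⟩ φ hφ
    obtain ⟨M, hM0, hM⟩ := weaklySummable_bound hp hφ
    set t : ℝ := (M + 1)⁻¹ with ht_def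
    have ht0 : 0 < t := by positivity
    set ψ : ℕ → E →L[𝕜] 𝕜 := fun j => ((t : ℝ) : 𝕜) • φ j with hψ_def
    have hψval : ∀ (Φ : (E →L[𝕜] 𝕜) →L[𝕜] 𝕜) (j : ℕ),
        ‖Φ (ψ j)‖ ^ p = t ^ p * ‖Φ (φ j)‖ ^ p := by
      intro Φ j
      rw [hψ_def]
      simp only
      rw [map_smul, norm_smul ((t : ℝ) : 𝕜) (Φ (φ j)), RCLike.norm_ofReal,
        abs_of_nonneg ht0.le, Real.mul_rpow ht0.le (norm_nonneg _)]
    have hψws : WeaklySummable 𝕜 p ψ := by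
      intro Φ
      have := (hφ Φ).mul_left (t ^ p)
      exact this.congr fun j => (hψval Φ j).symm
    have hψwn : weakNorm 𝕜 p ψ ≤ 1 := by
      refine ciSup_le fun Φ => ?_
      have heq : (∑' j, ‖Φ.1 (ψ j)‖ ^ p) ^ (1 / p)
          = t * (∑' j, ‖Φ.1 (φ j)‖ ^ p) ^ (1 / p) := by
        rw [tsum_congr (hψval Φ.1), tsum_mul_left,
          Real.mul_rpow (by positivity)
            (tsum_nonneg fun j => Real.rpow_nonneg (norm_nonneg _) p),
          one_div, Real.rpow_rpow_inv ht0.le hp0.ne']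
      rw [heq]
      calc t * (∑' j, ‖Φ.1 (φ j)‖ ^ p) ^ (1 / p) ≤ t * (M * ‖Φ.1‖) :=
            mul_le_mul_of_nonneg_left (hM Φ.1) ht0.le
        _ ≤ t * (M * 1) := by
            refine mul_le_mul_of_nonneg_left (mul_le_mul_of_nonneg_left Φ.2 hM0) ht0.le
        _ = (M + 1)⁻¹ * M := by rw [mul_one, ht_def]
        _ ≤ (M + 1)⁻¹ * (M + 1) := by
            refine mul_le_mul_of_nonneg_left (by linarith) (by positivity)
        _ = 1 := inv_mul_cancel₀ (by positivity)
    have hsum : ∀ n, ∑ j ∈ Finset.range n, ‖φ j (x j)‖ ≤ (M + 1) * C := by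
      intro n
      have hmem : (∑ j ∈ Finset.range n, ‖ψ j (x j)‖) ∈ cohenSet 𝕜 p x :=
        ⟨ψ, hψws, hψwn, n, rfl⟩
      have h1 : ∑ j ∈ Finset.range n, ‖ψ j (x j)‖
          = t * ∑ j ∈ Finset.range n, ‖φ j (x j)‖ := by
        rw [Finset.mul_sum]
        refine Finset.sum_congr rfl fun j _ => ?_
        rw [hψ_def]
        simp only
        rw [ContinuousLinearMap.smul_apply, norm_smul ((t : ℝ) : 𝕜) (φ j (x j)),
          RCLike.norm_ofReal, abs_of_nonneg ht0.le]
      have h2 := hC hmem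
      rw [h1] at h2
      have h3 := mul_le_mul_of_nonneg_left h2 (le_of_lt (inv_pos.mpr ht0))
      rw [← mul_assoc, inv_mul_cancel₀ ht0.ne', one_mul] at h3
      rwa [ht_def, inv_inv] at h3
    exact summable_of_sum_range_le (fun j => norm_nonneg _) hsum
  · -- backward direction
    intro h
    by_contra hc
    have key : ∀ k : ℕ, ∃ (ψ : ℕ → E →L[𝕜] 𝕜) (m : ℕ), WeaklySummable 𝕜 p ψ ∧
        weakNorm 𝕜 p ψ ≤ 1 ∧ (4:ℝ) ^ k < ∑ j ∈ Finset.range m, ‖ψ j (x j)‖ := by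
      intro k
      obtain ⟨r, hr, hlt⟩ := not_bddAbove_iff.mp hc ((4:ℝ) ^ k)
      obtain ⟨ψ, h1, h2, mm, rfl⟩ := hr
      exact ⟨ψ, mm, h1, h2, hlt⟩
    choose ψ m hws hwn hbig using key
    set c : ℕ → ℝ := fun k => ((2:ℝ) ^ (k + 1))⁻¹ with hc_def
    have hc0 : ∀ k, 0 < c k := fun k => by positivity
    have hceq : c = fun k => (2:ℝ)⁻¹ ^ (k + 1) := funext fun k => by
      rw [hc_def]; simp [inv_pow]
    have hcsum : Summable c := by
      rw [hceq]
      have h1 : Summable (fun k : ℕ => (2:ℝ)⁻¹ * (2:ℝ)⁻¹ ^ k) :=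
        (summable_geometric_of_lt_one (by norm_num) (by norm_num)).mul_left _
      exact h1.congr fun k => by rw [← pow_succ']
    have hctsum : ∑' k, c k = 1 := by
      rw [hceq]
      have h1 : ∑' k : ℕ, (2:ℝ)⁻¹ ^ (k + 1) = (2:ℝ)⁻¹ * ∑' k : ℕ, (2:ℝ)⁻¹ ^ k := by
        rw [← tsum_mul_left]
        exact tsum_congr fun k => by rw [← pow_succ']
      rw [h1, tsum_geometric_of_lt_one (by norm_num) (by norm_num)]
      norm_num
    set a : ℕ → ℕ → (E →L[𝕜] 𝕜) := fun k j =>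
      if j < m k then ((c k : ℝ) : 𝕜) • (signK (ψ k j (x j)) • ψ k j) else 0 with ha_def
    have hanorm : ∀ k j, ‖a k j‖ ≤ c k := by
      intro k j
      rw [ha_def]
      simp only
      split_ifs with hj
      · rw [norm_smul ((c k : ℝ) : 𝕜) (signK (ψ k j (x j)) • ψ k j),
          norm_smul (signK (ψ k j (x j))) (ψ k j),
          signK_norm, one_mul, RCLike.norm_ofReal, abs_of_nonneg (hc0 k).le]
        calc c k * ‖ψ k j‖ ≤ c k * 1 :=
              mul_le_mul_of_nonneg_left (entry_norm_le hp (hws k) (hwn k) j) (hc0 k).le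
          _ = c k := mul_one _
      · simp [(hc0 k).le]
    have haval : ∀ (Φ : (E →L[𝕜] 𝕜) →L[𝕜] 𝕜) (k j : ℕ),
        ‖Φ (a k j)‖ ≤ c k * ‖Φ (ψ k j)‖ := by
      intro Φ k j
      rw [ha_def]
      simp only
      split_ifs with hj
      · rw [map_smul, map_smul,
          norm_smul ((c k : ℝ) : 𝕜) (signK (ψ k j (x j)) • Φ (ψ k j)),
          norm_smul (signK (ψ k j (x j))) (Φ (ψ k j)), signK_norm, one_mul,
          RCLike.norm_ofReal, abs_of_nonneg (hc0 k).le]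
      · simp only [map_zero, norm_zero]
        positivity
    have hsummA : ∀ j, Summable fun k => a k j := fun j =>
      Summable.of_norm (hcsum.of_nonneg_of_le (fun k => norm_nonneg _) (fun k => hanorm k j))
    set φ0 : ℕ → E →L[𝕜] 𝕜 := fun j => ∑' k, a k j with hφ0_def
    set pe : ℝ≥0∞ := ENNReal.ofReal p with hpe_def
    haveI : Fact (1 ≤ pe) := ⟨by simpa [hpe_def] using ENNReal.one_le_ofReal.mpr hp.le⟩
    have htp : pe.toReal = p := ENNReal.toReal_ofReal hp0.le
    have hpe : 0 < pe.toReal := by rw [htp]; exact hp0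
    have hφ0ws : WeaklySummable 𝕜 p φ0 := by
      intro Φ
      refine summable_of_sum_range_le (c := ‖Φ‖ ^ p)
        (fun j => Real.rpow_nonneg (norm_nonneg _) p) fun N => ?_
      set v : ℕ → PiLp pe (fun _ : Fin N => ℝ) :=
        fun k => WithLp.toLp pe (fun j : Fin N => ‖Φ (a k (j : ℕ))‖) with hv_def
      have hvnn : ∀ k (j : Fin N), ‖v k j‖ = ‖Φ (a k (j : ℕ))‖ := by
        intro k j
        rw [hv_def]
        simp only [PiLp.toLp_apply]
        rw [Real.norm_eq_abs, abs_of_nonneg (norm_nonneg _)]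
      have hvnorm : ∀ k, ‖v k‖ ≤ c k * ‖Φ‖ := by
        intro k
        rw [PiLp.norm_eq_sum hpe, htp]
        have hsum_le : ∑ j : Fin N, ‖v k j‖ ^ p ≤ (c k * ‖Φ‖) ^ p := by
          calc ∑ j : Fin N, ‖v k j‖ ^ p
              ≤ ∑ j : Fin N, (c k * ‖Φ (ψ k (j : ℕ))‖) ^ p := by
                refine Finset.sum_le_sum fun j _ => ?_
                rw [hvnn k j]
                exact Real.rpow_le_rpow (norm_nonneg _) (haval Φ k (j : ℕ)) hp0.le
            _ = c k ^ p * ∑ j : Fin N, ‖Φ (ψ k (j : ℕ))‖ ^ p := by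
                rw [Finset.mul_sum]
                exact Finset.sum_congr rfl fun j _ =>
                  Real.mul_rpow (hc0 k).le (norm_nonneg _)
            _ ≤ c k ^ p * ∑' j, ‖Φ (ψ k j)‖ ^ p := by
                refine mul_le_mul_of_nonneg_left ?_ (Real.rpow_nonneg (hc0 k).le p)
                rw [Fin.sum_univ_eq_sum_range (fun j => ‖Φ (ψ k j)‖ ^ p) N]
                exact Summable.sum_le_tsum _ (fun j _ => Real.rpow_nonneg (norm_nonneg _) p)
                  (hws k Φ)
            _ ≤ c k ^ p * ‖Φ‖ ^ p := by
                refine mul_le_mul_of_nonneg_left (term_bound' hp (hws k) (hwn k) Φ)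
                  (Real.rpow_nonneg (hc0 k).le p)
            _ = (c k * ‖Φ‖) ^ p := (Real.mul_rpow (hc0 k).le (norm_nonneg _)).symm
        calc (∑ j : Fin N, ‖v k j‖ ^ p) ^ (1 / p)
            ≤ ((c k * ‖Φ‖) ^ p) ^ (1 / p) :=
              Real.rpow_le_rpow (Finset.sum_nonneg fun j _ =>
                Real.rpow_nonneg (norm_nonneg _) p) hsum_le (by positivity)
          _ = c k * ‖Φ‖ := by rw [one_div, Real.rpow_rpow_inv (by positivity) hp0.ne']
      have hvnormsum : Summable fun k => ‖v k‖ :=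
        Summable.of_nonneg_of_le (fun k => norm_nonneg _) hvnorm (hcsum.mul_right ‖Φ‖)
      have hvsummable : Summable v := by
        refine Summable.of_norm ?_
        exact hvnormsum
      have hvts : ∀ j : Fin N, (∑' k, v k) j = ∑' k, ‖Φ (a k (j : ℕ))‖ := by
        intro j
        have h1 := (PiLp.proj (𝕜 := ℝ) pe (fun _ : Fin N => ℝ) j).map_tsum hvsummable
        simpa [hv_def] using h1
      have hΦnormsum : ∀ j : ℕ, Summable fun k => ‖Φ (a k j)‖ := by
        intro j
        refine Summable.of_nonneg_of_le (fun k => norm_nonneg _)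
          (fun k => le_trans (Φ.le_opNorm _)
            (mul_le_mul_of_nonneg_left (hanorm k j) (norm_nonneg _)))
          (hcsum.mul_left ‖Φ‖)
      have hbj : ∀ j : Fin N, ‖Φ (φ0 (j : ℕ))‖ ≤ (∑' k, v k) j := by
        intro j
        rw [hvts j, hφ0_def]
        simp only
        rw [Φ.map_tsum (hsummA (j : ℕ))]
        exact norm_tsum_le_tsum_norm (hΦnormsum (j : ℕ))
      have hfin : ∑ j : Fin N, ‖(∑' k, v k) j‖ ^ p = ‖∑' k, v k‖ ^ p := by
        rw [PiLp.norm_eq_sum hpe, htp, one_div, Real.rpow_inv_rpow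
          (Finset.sum_nonneg fun j _ => Real.rpow_nonneg (norm_nonneg _) p) hp0.ne']
      calc ∑ j ∈ Finset.range N, ‖Φ (φ0 j)‖ ^ p
          = ∑ j : Fin N, ‖Φ (φ0 (j : ℕ))‖ ^ p :=
            (Fin.sum_univ_eq_sum_range (fun j => ‖Φ (φ0 j)‖ ^ p) N).symm
        _ ≤ ∑ j : Fin N, ‖(∑' k, v k) j‖ ^ p := by
            refine Finset.sum_le_sum fun j _ => ?_
            exact Real.rpow_le_rpow (norm_nonneg _)
              ((hbj j).trans (le_abs_self _)) hp0.le
        _ = ‖∑' k, v k‖ ^ p := hfin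
        _ ≤ ‖Φ‖ ^ p := by
            refine Real.rpow_le_rpow (norm_nonneg _) ?_ hp0.le
            calc ‖∑' k, v k‖ ≤ ∑' k, ‖v k‖ := norm_tsum_le_tsum_norm hvnormsum
              _ ≤ ∑' k, c k * ‖Φ‖ := Summable.tsum_le_tsum hvnorm hvnormsum (hcsum.mul_right ‖Φ‖)
              _ = (∑' k, c k) * ‖Φ‖ := tsum_mul_right
              _ = ‖Φ‖ := by rw [hctsum, one_mul]
    -- the pairing with φ0 is summable by hypothesis, but its partial sums are unbounded
    have hsum := h φ0 hφ0ws
    set T : ℝ := ∑' j, ‖φ0 j (x j)‖ with hT_def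
    have hlow : ∀ k, c k * (4:ℝ) ^ k ≤ ∑ j ∈ Finset.range (m k), ‖φ0 j (x j)‖ := by
      intro k
      have hjlow : ∀ j ∈ Finset.range (m k), c k * ‖ψ k j (x j)‖ ≤ ‖φ0 j (x j)‖ := by
        intro j hj
        rw [Finset.mem_range] at hj
        set r : ℕ → ℝ := fun i => if j < m i then c i * ‖ψ i j (x j)‖ else 0 with hr_def
        have hav : ∀ i, (a i j) (x j) = ((r i : ℝ) : 𝕜) := by
          intro i
          rw [ha_def, hr_def]
          simp only
          split_ifs with hji
          · rw [ContinuousLinearMap.smul_apply, ContinuousLinearMap.smul_apply,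
              smul_eq_mul, smul_eq_mul, signK_mul, ← RCLike.ofReal_mul]
          · simp
        have hrnn : ∀ i, 0 ≤ r i := by
          intro i
          rw [hr_def]
          simp only
          split_ifs
          · positivity
          · exact le_refl 0
        have hrsum : Summable r := by
          refine Summable.of_nonneg_of_le hrnn (fun i => ?_) (hcsum.mul_right ‖x j‖)
          rw [hr_def]
          simp only
          split_ifs with hji
          · refine mul_le_mul_of_nonneg_left ?_ (hc0 i).le
            calc ‖ψ i j (x j)‖ ≤ ‖ψ i j‖ * ‖x j‖ := (ψ i j).le_opNorm _
              _ ≤ 1 * ‖x j‖ := mul_le_mul_of_nonneg_right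
                  (entry_norm_le hp (hws i) (hwn i) j) (norm_nonneg _)
              _ = ‖x j‖ := one_mul _
          · positivity
        have hφval : φ0 j (x j) = ((∑' i, r i : ℝ) : 𝕜) := by
          rw [hφ0_def]
          simp only
          have h1 := (ContinuousLinearMap.apply 𝕜 𝕜 (x j)).map_tsum (hsummA j)
          simp only [ContinuousLinearMap.apply_apply] at h1
          rw [h1, tsum_congr hav]
          exact ((RCLike.ofRealCLM (K := 𝕜)).map_tsum hrsum).symm
        rw [hφval, RCLike.norm_ofReal, abs_of_nonneg (tsum_nonneg hrnn)]
        have h2 : r k ≤ ∑' i, r i := Summable.le_tsum hrsum k fun i _ => hrnn i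
        have h3 : r k = c k * ‖ψ k j (x j)‖ := by rw [hr_def]; simp only; rw [if_pos hj]
        rw [← h3]
        exact h2
      calc c k * (4:ℝ) ^ k ≤ c k * ∑ j ∈ Finset.range (m k), ‖ψ k j (x j)‖ :=
            mul_le_mul_of_nonneg_left (hbig k).le (hc0 k).le
        _ = ∑ j ∈ Finset.range (m k), c k * ‖ψ k j (x j)‖ := Finset.mul_sum _ _ _
        _ ≤ ∑ j ∈ Finset.range (m k), ‖φ0 j (x j)‖ := Finset.sum_le_sum hjlow
    obtain ⟨k, hk⟩ := pow_unbounded_of_one_lt (2 * T + 1) (one_lt_two (α := ℝ))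
    have hA : (0:ℝ) < 2 ^ k := by positivity
    have hT0 : 0 ≤ T := tsum_nonneg fun j => norm_nonneg _
    have hck : c k * (4:ℝ) ^ k = (2:ℝ) ^ k / 2 := by
      rw [hc_def]
      simp only
      have h4 : (4:ℝ) ^ k = (2:ℝ) ^ k * (2:ℝ) ^ k := by
        rw [← mul_pow]; norm_num
      rw [h4, pow_succ]
      field_simp
    have hTlt : T < c k * (4:ℝ) ^ k := by
      rw [hck]
      linarith
    have hle : ∑ j ∈ Finset.range (m k), ‖φ0 j (x j)‖ ≤ T :=
      Summable.sum_le_tsum _ (fun j _ => norm_nonneg _) hsum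
    exact absurd ((hlow k).trans hle) (not_le.mpr hTlt)
end
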